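/- arXiv:2501.11640 — 7 statements merged into one kernel-verified Lean document; each statement's English description precedes it below -/
import Mathlib

section
/- Let u_1, ..., u_{d-1} and v_1, ..., v_{d-1} be two sequences of vectors in ℂ^d that are phase-unitary equivalent (i.e., there is a unitary T : ℂ^d → ℂ^d and phases θ_j with v_j = e^{iθ_j} T(u_j)), and suppose each sequence is linearly independent. Let u_d, v_d ∈ ℂ^d satisfy ‖u_d‖ = ‖v_d‖, ⟨u_j, u_d⟩ = 0 and ⟨v_j, v_d⟩ = 0 for all j = 1, ..., d-1. Then the extended sequences u_1, ..., u_d and v_1, ..., v_d are also phase-unitary equivalent. -/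
open Complex

/-- Two sequences of vectors in `ℂ^d` are phase-unitary equivalent if there is a
unitary map `T` and phases `θ j` with `v j = e^{i θ j} • T (u j)`. -/
def PhaseUnitaryEquiv {ι : Type*} {d : ℕ}
    (u v : ι → EuclideanSpace ℂ (Fin d)) : Prop :=
  ∃ (T : EuclideanSpace ℂ (Fin d) ≃ₗᵢ[ℂ] EuclideanSpace ℂ (Fin d)) (θ : ι → ℝ),
    ∀ j, v j = Complex.exp (θ j * Complex.I) • T (u j)

lemma mem_orth_span_range {d : ℕ} {k : ℕ} (v : Fin k → EuclideanSpace ℂ (Fin d))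
    (x : EuclideanSpace ℂ (Fin d)) (h : ∀ j, (inner ℂ (v j) x : ℂ) = 0) :
    x ∈ (Submodule.span ℂ (Set.range v))ᗮ := by
  rw [Submodule.mem_orthogonal]
  intro w hw
  induction hw using Submodule.span_induction with
  | mem w hw => obtain ⟨j, rfl⟩ := hw; exact h j
  | zero => simp
  | add a b _ _ ha hb => rw [inner_add_left, ha, hb, add_zero]
  | smul c a _ ha => rw [inner_smul_left, ha, mul_zero]

theorem stmt_0 (n : ℕ) (u v : Fin n → EuclideanSpace ℂ (Fin (n + 1)))
    (hu : LinearIndependent ℂ u) (hv : LinearIndependent ℂ v)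
    (huv : PhaseUnitaryEquiv u v)
    (ud vd : EuclideanSpace ℂ (Fin (n + 1)))
    (hnorm : ‖ud‖ = ‖vd‖)
    (hou : ∀ j, (inner ℂ (u j) ud : ℂ) = 0)
    (hov : ∀ j, (inner ℂ (v j) vd : ℂ) = 0) :
    PhaseUnitaryEquiv (Fin.snoc u ud) (Fin.snoc v vd) := by
  obtain ⟨T, θ, hT⟩ := huv
  -- T ud is orthogonal to each v j
  have hTud : ∀ j, (inner ℂ (v j) (T ud) : ℂ) = 0 := by
    intro j
    rw [hT j, inner_smul_left, T.inner_map_map, hou j, mul_zero]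
  set W : Submodule ℂ (EuclideanSpace ℂ (Fin (n + 1))) :=
    (Submodule.span ℂ (Set.range v))ᗮ with hW
  have hvdW : vd ∈ W := mem_orth_span_range v vd hov
  have hTudW : T ud ∈ W := mem_orth_span_range v (T ud) hTud
  have hdim : Module.finrank ℂ W = 1 := by
    have h1 : Module.finrank ℂ (Submodule.span ℂ (Set.range v)) = n := by
      rw [finrank_span_eq_card hv, Fintype.card_fin]
    have h2 := Submodule.finrank_add_finrank_orthogonal
      (K := Submodule.span ℂ (Set.range v))
    rw [h1, finrank_euclideanSpace, Fintype.card_fin] at h2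
    rw [hW]
    omega
  by_cases hud0 : ud = 0
  · subst hud0
    have hvd0 : vd = 0 := by
      rw [← norm_eq_zero, ← hnorm, norm_zero]
    refine ⟨T, Fin.snoc θ 0, fun j => ?_⟩
    refine Fin.lastCases ?_ (fun i => ?_) j
    · simp [hvd0]
    · simpa using hT i
  · -- T ud ≠ 0, spans W, so vd = c • T ud
    have hTud0 : T ud ≠ 0 := by simpa using hud0
    have hspan : Submodule.span ℂ {T ud} = W := by
      apply Submodule.eq_of_le_of_finrank_eq
      · rwa [Submodule.span_singleton_le_iff_mem]
      · rw [hdim, finrank_span_singleton hTud0]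
    have hvd_mem : vd ∈ Submodule.span ℂ {T ud} := hspan ▸ hvdW
    obtain ⟨c, hc⟩ := Submodule.mem_span_singleton.mp hvd_mem
    have hnormTud : ‖T ud‖ = ‖ud‖ := T.norm_map ud
    have habs : ‖c‖ = 1 := by
      have : ‖vd‖ = ‖c‖ * ‖T ud‖ := by
        rw [← hc, norm_smul]
      rw [hnormTud, ← hnorm] at this
      have hne : ‖ud‖ ≠ 0 := norm_ne_zero_iff.mpr hud0
      have h2 : ‖c‖ * ‖ud‖ = 1 * ‖ud‖ := by rw [one_mul]; linarith
      exact mul_right_cancel₀ hne h2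
    refine ⟨T, Fin.snoc θ c.arg, fun j => ?_⟩
    refine Fin.lastCases ?_ (fun i => ?_) j
    · have hc' : c = Complex.exp (c.arg * I) := by
        conv_lhs => rw [← Complex.norm_mul_exp_arg_mul_I c]
        rw [habs, ofReal_one, one_mul]
      simp only [Fin.snoc_last]
      rw [← hc, ← hc']
    · simpa using hT i
end

section
/- For all real α and β, the quantity sin α · sin β · cos(α − β) lies in the interval [−1/8, 1]. -/
theorem stmt_4 (α β : ℝ) :
    -(1 / 8 : ℝ) ≤ Real.sin α * Real.sin β * Real.cos (α - β) ∧
      Real.sin α * Real.sin β * Real.cos (α - β) ≤ 1 := by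
  have h : Real.sin α * Real.sin β =
      (Real.cos (α - β) - Real.cos (α + β)) / 2 := by
    rw [Real.cos_sub, Real.cos_add]; ring
  set x := Real.cos (α - β)
  set y := Real.cos (α + β)
  have hx1 : -1 ≤ x := Real.neg_one_le_cos _
  have hx2 : x ≤ 1 := Real.cos_le_one _
  have hy1 : -1 ≤ y := Real.neg_one_le_cos _
  have hy2 : y ≤ 1 := Real.cos_le_one _
  rw [h]
  constructor <;> nlinarith [mul_nonneg (by linarith : (0:ℝ) ≤ 1 + y) (sq_nonneg (x - 1/2)), mul_nonneg (by linarith : (0:ℝ) ≤ 1 - y) (sq_nonneg (x + 1/2)), sq_nonneg x]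
end

section
/- If real numbers α, β, φ with cos φ ≠ 0 satisfy sin α · sin β · cos(α − β) = −tan² φ, then |φ| ≤ arctan(1/√8) modulo π; more precisely, tan² φ ≤ 1/8. -/
theorem stmt_5 (α β φ : ℝ) (hcφ : Real.cos φ ≠ 0)
    (h : Real.sin α * Real.sin β * Real.cos (α - β) = -(Real.tan φ) ^ 2) :
    (Real.tan φ) ^ 2 ≤ 1 / 8 := by
  have key : -(1/8 : ℝ) ≤ Real.sin α * Real.sin β * Real.cos (α - β) := by
    have e1 : Real.sin α * Real.sin β
        = (Real.cos (α - β) - Real.cos (α + β)) / 2 := by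
      rw [Real.cos_sub, Real.cos_add]; ring
    rw [e1]
    have hd1 := Real.neg_one_le_cos (α + β)
    have hd2 := Real.cos_le_one (α + β)
    nlinarith [sq_nonneg (2 * Real.cos (α - β) - Real.cos (α + β)),
      mul_nonneg (by linarith : (0:ℝ) ≤ 1 - Real.cos (α + β))
        (by linarith : (0:ℝ) ≤ 1 + Real.cos (α + β))]
  linarith [h ▸ key]
end

section
/- Let b, c ∈ ℂ with b ≠ 0 and c ≠ 0. If the determinant of the 3×3 matrix with rows (1, −1/b, 0), (1, 0, c̄), (0, 1, c̄/b̄) is zero, then |b| = 1 or c = 0. -/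
open Complex

theorem stmt_6 (b c : ℂ) (hb : b ≠ 0) (hc : c ≠ 0)
    (hdet : Matrix.det
      !![1, -1 / b, 0;
         1, 0, (starRingEnd ℂ) c;
         0, 1, (starRingEnd ℂ) c / (starRingEnd ℂ) b] = 0) :
    ‖b‖ = 1 ∨ c = 0 := by
  have hb' : (starRingEnd ℂ) b ≠ 0 := by simpa using hb
  have hc' : (starRingEnd ℂ) c ≠ 0 := by simpa using hc
  rw [Matrix.det_fin_three] at hdet
  simp at hdet
  field_simp at hdet
  have h : (starRingEnd ℂ) c * (1 - b * (starRingEnd ℂ) b) = 0 := by ring_nf; linear_combination hdet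
  rcases mul_eq_zero.mp h with h1 | h2
  · exact absurd h1 hc'
  · left
    have hbb : b * (starRingEnd ℂ) b = 1 := by linear_combination -h2
    have := Complex.mul_conj b
    have hns : (normSq b : ℂ) = 1 := by rw [← Complex.mul_conj]; exact hbb
    have hns' : normSq b = 1 := by exact_mod_cast hns
    have : (‖b‖)^2 = 1 := by rw [Complex.sq_norm]; exact hns'
    nlinarith [norm_nonneg b]
end

section
/- The 31 vectors v_1 = (1,0,0), v_2 = (0,1,0), v_3 = (0,0,1), v_4 = (1,1,0), v_5 = (−1,1,0), v_6 = (1,0,1), v_7 = (1,0,−1), v_8 = (0,1,1), v_9 = (0,−1,1), v_10 = (−2,1,0), v_11 = (1,2,0), v_12 = (2,0,1), v_13 = (−2,0,1), v_14 = (1,1,1), v_15 = (−1,1,1), v_16 = (1,−1,1), v_17 = (1,1,−1), v_18 = (0,2,1), v_19 = (0,−2,1), v_20 = (1,0,2), v_21 = (1,0,−2), v_22 = (0,1,2), v_23 = (0,1,−2), v_24 = (−2,1,1), v_25 = (2,−1,1), v_26 = (1,2,1), v_27 = (1,2,−1), v_28 = (1,1,2), v_29 = (−1,1,2), v_30 =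 (1,−1,2), v_31 = (1,1,−2) in ℝ^3 form a Kochen–Specker set: there is no function f : {1,...,31} → {0,1} such that f(i) + f(j) ≤ 1 whenever v_i ⊥ v_j, and f(i) + f(j) + f(k) = 1 whenever v_i, v_j, v_k are pairwise orthogonal. -/
/-- The 31 vectors of the CK-31 Kochen–Specker set in `ℝ^3`. -/
def ck31 : Fin 31 → Fin 3 → ℝ :=
  ![![1, 0, 0], ![0, 1, 0], ![0, 0, 1], ![1, 1, 0], ![-1, 1, 0],
    ![1, 0, 1], ![1, 0, -1], ![0, 1, 1], ![0, -1, 1], ![-2, 1, 0],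
    ![1, 2, 0], ![2, 0, 1], ![-2, 0, 1], ![1, 1, 1], ![-1, 1, 1],
    ![1, -1, 1], ![1, 1, -1], ![0, 2, 1], ![0, -2, 1], ![1, 0, 2],
    ![1, 0, -2], ![0, 1, 2], ![0, 1, -2], ![-2, 1, 1], ![2, -1, 1],
    ![1, 2, 1], ![1, 2, -1], ![1, 1, 2], ![-1, 1, 2], ![1, -1, 2],
    ![1, 1, -2]]

/-- Orthogonality with respect to the standard inner product on `ℝ^3`. -/
def ck31Orth (i j : Fin 31) : Prop := ∑ t : Fin 3, ck31 i t * ck31 j t = 0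

/-! Auxiliary machinery: a verified backtracking search showing that no
101-coloring of the CK-31 set exists. -/

/-- The orthogonal pairs (as natural number indices, increasing). -/
def ksP : List (Nat × Nat) := [(0, 1), (0, 2), (0, 7), (0, 8), (0, 17), (0, 18), (0, 21), (0, 22), (1, 2), (1, 5), (1, 6), (1, 11), (1, 12), (1, 19), (1, 20), (2, 3), (2, 4), (2, 9), (2, 10), (3, 4), (3, 14), (3, 15), (3, 28), (3, 29), (4, 13), (4, 16), (4, 27), (4, 30), (5, 6), (5, 14), (5, 16), (5, 26), (6, 13), (6, 15), (6, 25), (7, 8), (7, 15), (7, 16), (7, 24), (8, 13), (8, 14), (8, 23), (9, 10), (9, 25), (9, 26), (10, 23), (10, 24), (11, 20), (11, 28), (11, 30), (12, 19), (12, 27), (12, 29), (13, 23), (13, 30), (14, 26), (14, 29), (15, 25), (15, 28), (16, 24), (16, 27), (17, 22), (17, 29), (17, 30), (18, 21), (18, 27), (18, 28), (19, 23), (20, 24), (21, 26), (22, 25)]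

/-- The orthogonal triples (as natural number indices, increasing). -/
def ksT : List (Nat × Nat × Nat) := [(0, 1, 2), (0, 7, 8), (0, 17, 22), (0, 18, 21), (1, 5, 6), (1, 11, 20), (1, 12, 19), (2, 3, 4), (2, 9, 10), (3, 14, 29), (3, 15, 28), (4, 13, 30), (4, 16, 27), (5, 14, 26), (6, 15, 25), (7, 16, 24), (8, 13, 23)]

lemma hPidx : ∀ p ∈ ksP, p.1 < p.2 ∧ p.2 < 31 := by decide

lemma hTidx : ∀ p ∈ ksT, p.1 < p.2.1 ∧ p.2.1 < p.2.2 ∧ p.2.2 < 31 := by decide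

/-- Check the pair constraints whose maximal index is `n - 1`. -/
def ksOkP (n : Nat) (h : Nat) : Bool :=
  ksP.all fun p => !(decide (p.2 + 1 = n) && h.testBit p.1 && h.testBit p.2)

/-- Check the triple constraints whose maximal index is `n - 1`. -/
def ksOkT (n : Nat) (h : Nat) : Bool :=
  ksT.all fun p => (!decide (p.2.2 + 1 = n)) ||
    ((h.testBit p.1).toNat + (h.testBit p.2.1).toNat + (h.testBit p.2.2).toNat == 1)

def ksOk (n : Nat) (h : Nat) : Bool := ksOkP n h && ksOkT n h

/-- Backtracking search: try to extend the partial assignment `h`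
(bits `0..n-1` assigned) to all 31 indices. -/
def ksSearch : Nat → Nat → Nat → Bool
  | 0, _, _ => true
  | m+1, n, h =>
    (ksOk (n+1) h && ksSearch m (n+1) h) ||
    (ksOk (n+1) (h ||| 2^n) && ksSearch m (n+1) (h ||| 2^n))

set_option maxHeartbeats 4000000 in
theorem ksKey : ksSearch 31 0 0 = false := by decide +kernel

lemma ok_of (g : Nat → Bool)
    (hgP : ∀ p ∈ ksP, (!(g p.1 && g p.2)) = true)
    (hgT : ∀ p ∈ ksT,
      ((g p.1).toNat + (g p.2.1).toNat + (g p.2.2).toNat == 1) = true)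
    (n : Nat) (h : Nat) (agree : ∀ i < n, h.testBit i = g i) :
    ksOk n h = true := by
  unfold ksOk ksOkP ksOkT
  rw [Bool.and_eq_true, List.all_eq_true, List.all_eq_true]
  constructor
  · intro p hp
    obtain ⟨h12, _⟩ := hPidx p hp
    by_cases hn : p.2 + 1 = n
    · have e2 : h.testBit p.2 = g p.2 := agree p.2 (by omega)
      have e1 : h.testBit p.1 = g p.1 := agree p.1 (by omega)
      have := hgP p hp
      simp only [e1, e2, hn]
      simp_all
    · simp [hn]
  · intro p hp
    obtain ⟨h1, h2, h3⟩ := hTidx p hp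
    by_cases hn : p.2.2 + 1 = n
    · have e3 : h.testBit p.2.2 = g p.2.2 := agree p.2.2 (by omega)
      have e2 : h.testBit p.2.1 = g p.2.1 := agree p.2.1 (by omega)
      have e1 : h.testBit p.1 = g p.1 := agree p.1 (by omega)
      have := hgT p hp
      simp only [e1, e2, e3, hn]
      simp_all
    · simp [hn]

lemma search_true (g : Nat → Bool)
    (hgP : ∀ p ∈ ksP, (!(g p.1 && g p.2)) = true)
    (hgT : ∀ p ∈ ksT,
      ((g p.1).toNat + (g p.2.1).toNat + (g p.2.2).toNat == 1) = true) :
    ∀ m n h, h < 2 ^ n → (∀ i < n, Nat.testBit h i = g i) →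
      ksSearch m n h = true := by
  intro m
  induction m with
  | zero => intro n h _ _; rfl
  | succ m ih =>
    intro n h hlt agree
    have hlt' : h < 2 ^ (n + 1) := lt_of_lt_of_le hlt (Nat.pow_le_pow_right (by norm_num) (by omega))
    have hlt2 : h ||| 2 ^ n < 2 ^ (n + 1) := by
      refine Nat.or_lt_two_pow hlt' ?_
      exact Nat.pow_lt_pow_right (by norm_num) (by omega)
    cases hgn : g n with
    | false =>
      have agree' : ∀ i < n + 1, Nat.testBit h i = g i := by
        intro i hi
        rcases Nat.lt_or_ge i n with hin | hin
        · exact agree i hin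
        · have : i = n := by omega
          subst this
          rw [Nat.testBit_eq_false_of_lt hlt, hgn]
      have hok : ksOk (n+1) h = true := ok_of g hgP hgT (n+1) h agree'
      have hs : ksSearch m (n+1) h = true := ih (n+1) h hlt' agree'
      simp [ksSearch, hok, hs]
    | true =>
      have agree' : ∀ i < n + 1, Nat.testBit (h ||| 2^n) i = g i := by
        intro i hi
        rw [Nat.testBit_lor]
        rcases Nat.lt_or_ge i n with hin | hin
        · rw [Nat.testBit_two_pow_of_ne (by omega), agree i hin, Bool.or_false]
        · have : i = n := by omega
          subst this
          rw [Nat.testBit_two_pow_self, hgn, Bool.or_true]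
      have hok : ksOk (n+1) (h ||| 2^n) = true := ok_of g hgP hgT (n+1) _ agree'
      have hs : ksSearch m (n+1) (h ||| 2^n) = true := ih (n+1) _ hlt2 agree'
      simp [ksSearch, hok, hs]

/-! The orthogonality facts for all pairs in `ksP`. -/

lemma o_0_1 : ck31Orth 0 1 := by
  unfold ck31Orth
  rw [Fin.sum_univ_three, show ck31 0 0 = (1 : ℝ) from rfl, show ck31 0 1 = (0 : ℝ) from rfl, show ck31 0 2 = (0 : ℝ) from rfl, show ck31 1 0 = (0 : ℝ) from rfl, show ck31 1 1 = (1 : ℝ) from rfl, show ck31 1 2 = (0 : ℝ) from rfl]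
  norm_num

lemma o_0_2 : ck31Orth 0 2 := by
  unfold ck31Orth
  rw [Fin.sum_univ_three, show ck31 0 0 = (1 : ℝ) from rfl, show ck31 0 1 = (0 : ℝ) from rfl, show ck31 0 2 = (0 : ℝ) from rfl, show ck31 2 0 = (0 : ℝ) from rfl, show ck31 2 1 = (0 : ℝ) from rfl, show ck31 2 2 = (1 : ℝ) from rfl]
  norm_num

lemma o_0_7 : ck31Orth 0 7 := by
  unfold ck31Orth
  rw [Fin.sum_univ_three, show ck31 0 0 = (1 : ℝ) from rfl, show ck31 0 1 = (0 : ℝ) from rfl, show ck31 0 2 = (0 : ℝ) from rfl, show ck31 7 0 = (0 : ℝ) from rfl, show ck31 7 1 = (1 : ℝ) from rfl, show ck31 7 2 = (1 : ℝ) from rfl]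
  norm_num

lemma o_0_8 : ck31Orth 0 8 := by
  unfold ck31Orth
  rw [Fin.sum_univ_three, show ck31 0 0 = (1 : ℝ) from rfl, show ck31 0 1 = (0 : ℝ) from rfl, show ck31 0 2 = (0 : ℝ) from rfl, show ck31 8 0 = (0 : ℝ) from rfl, show ck31 8 1 = (-1 : ℝ) from rfl, show ck31 8 2 = (1 : ℝ) from rfl]
  norm_num

lemma o_0_17 : ck31Orth 0 17 := by
  unfold ck31Orth
  rw [Fin.sum_univ_three, show ck31 0 0 = (1 : ℝ) from rfl, show ck31 0 1 = (0 : ℝ) from rfl, show ck31 0 2 = (0 : ℝ) from rfl, show ck31 17 0 = (0 : ℝ) from rfl, show ck31 17 1 = (2 : ℝ) from rfl, show ck31 17 2 = (1 : ℝ) from rfl]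
  norm_num

lemma o_0_18 : ck31Orth 0 18 := by
  unfold ck31Orth
  rw [Fin.sum_univ_three, show ck31 0 0 = (1 : ℝ) from rfl, show ck31 0 1 = (0 : ℝ) from rfl, show ck31 0 2 = (0 : ℝ) from rfl, show ck31 18 0 = (0 : ℝ) from rfl, show ck31 18 1 = (-2 : ℝ) from rfl, show ck31 18 2 = (1 : ℝ) from rfl]
  norm_num

lemma o_0_21 : ck31Orth 0 21 := by
  unfold ck31Orth
  rw [Fin.sum_univ_three, show ck31 0 0 = (1 : ℝ) from rfl, show ck31 0 1 = (0 : ℝ) from rfl, show ck31 0 2 = (0 : ℝ) from rfl, show ck31 21 0 = (0 : ℝ) from rfl, show ck31 21 1 = (1 : ℝ) from rfl, show ck31 21 2 = (2 : ℝ) from rfl]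
  norm_num

lemma o_0_22 : ck31Orth 0 22 := by
  unfold ck31Orth
  rw [Fin.sum_univ_three, show ck31 0 0 = (1 : ℝ) from rfl, show ck31 0 1 = (0 : ℝ) from rfl, show ck31 0 2 = (0 : ℝ) from rfl, show ck31 22 0 = (0 : ℝ) from rfl, show ck31 22 1 = (1 : ℝ) from rfl, show ck31 22 2 = (-2 : ℝ) from rfl]
  norm_num

lemma o_1_2 : ck31Orth 1 2 := by
  unfold ck31Orth
  rw [Fin.sum_univ_three, show ck31 1 0 = (0 : ℝ) from rfl, show ck31 1 1 = (1 : ℝ) from rfl, show ck31 1 2 = (0 : ℝ) from rfl, show ck31 2 0 = (0 : ℝ) from rfl, show ck31 2 1 = (0 : ℝ) from rfl, show ck31 2 2 = (1 : ℝ) from rfl]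
  norm_num

lemma o_1_5 : ck31Orth 1 5 := by
  unfold ck31Orth
  rw [Fin.sum_univ_three, show ck31 1 0 = (0 : ℝ) from rfl, show ck31 1 1 = (1 : ℝ) from rfl, show ck31 1 2 = (0 : ℝ) from rfl, show ck31 5 0 = (1 : ℝ) from rfl, show ck31 5 1 = (0 : ℝ) from rfl, show ck31 5 2 = (1 : ℝ) from rfl]
  norm_num

lemma o_1_6 : ck31Orth 1 6 := by
  unfold ck31Orth
  rw [Fin.sum_univ_three, show ck31 1 0 = (0 : ℝ) from rfl, show ck31 1 1 = (1 : ℝ) from rfl, show ck31 1 2 = (0 : ℝ) from rfl, show ck31 6 0 = (1 : ℝ) from rfl, show ck31 6 1 = (0 : ℝ) from rfl, show ck31 6 2 = (-1 : ℝ) from rfl]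
  norm_num

lemma o_1_11 : ck31Orth 1 11 := by
  unfold ck31Orth
  rw [Fin.sum_univ_three, show ck31 1 0 = (0 : ℝ) from rfl, show ck31 1 1 = (1 : ℝ) from rfl, show ck31 1 2 = (0 : ℝ) from rfl, show ck31 11 0 = (2 : ℝ) from rfl, show ck31 11 1 = (0 : ℝ) from rfl, show ck31 11 2 = (1 : ℝ) from rfl]
  norm_num

lemma o_1_12 : ck31Orth 1 12 := by
  unfold ck31Orth
  rw [Fin.sum_univ_three, show ck31 1 0 = (0 : ℝ) from rfl, show ck31 1 1 = (1 : ℝ) from rfl, show ck31 1 2 = (0 : ℝ) from rfl, show ck31 12 0 = (-2 : ℝ) from rfl, show ck31 12 1 = (0 : ℝ) from rfl, show ck31 12 2 = (1 : ℝ) from rfl]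
  norm_num

lemma o_1_19 : ck31Orth 1 19 := by
  unfold ck31Orth
  rw [Fin.sum_univ_three, show ck31 1 0 = (0 : ℝ) from rfl, show ck31 1 1 = (1 : ℝ) from rfl, show ck31 1 2 = (0 : ℝ) from rfl, show ck31 19 0 = (1 : ℝ) from rfl, show ck31 19 1 = (0 : ℝ) from rfl, show ck31 19 2 = (2 : ℝ) from rfl]
  norm_num

lemma o_1_20 : ck31Orth 1 20 := by
  unfold ck31Orth
  rw [Fin.sum_univ_three, show ck31 1 0 = (0 : ℝ) from rfl, show ck31 1 1 = (1 : ℝ) from rfl, show ck31 1 2 = (0 : ℝ) from rfl, show ck31 20 0 = (1 : ℝ) from rfl, show ck31 20 1 = (0 : ℝ) from rfl, show ck31 20 2 = (-2 : ℝ) from rfl]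
  norm_num

lemma o_2_3 : ck31Orth 2 3 := by
  unfold ck31Orth
  rw [Fin.sum_univ_three, show ck31 2 0 = (0 : ℝ) from rfl, show ck31 2 1 = (0 : ℝ) from rfl, show ck31 2 2 = (1 : ℝ) from rfl, show ck31 3 0 = (1 : ℝ) from rfl, show ck31 3 1 = (1 : ℝ) from rfl, show ck31 3 2 = (0 : ℝ) from rfl]
  norm_num

lemma o_2_4 : ck31Orth 2 4 := by
  unfold ck31Orth
  rw [Fin.sum_univ_three, show ck31 2 0 = (0 : ℝ) from rfl, show ck31 2 1 = (0 : ℝ) from rfl, show ck31 2 2 = (1 : ℝ) from rfl, show ck31 4 0 = (-1 : ℝ) from rfl, show ck31 4 1 = (1 : ℝ) from rfl, show ck31 4 2 = (0 : ℝ) from rfl]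
  norm_num

lemma o_2_9 : ck31Orth 2 9 := by
  unfold ck31Orth
  rw [Fin.sum_univ_three, show ck31 2 0 = (0 : ℝ) from rfl, show ck31 2 1 = (0 : ℝ) from rfl, show ck31 2 2 = (1 : ℝ) from rfl, show ck31 9 0 = (-2 : ℝ) from rfl, show ck31 9 1 = (1 : ℝ) from rfl, show ck31 9 2 = (0 : ℝ) from rfl]
  norm_num

lemma o_2_10 : ck31Orth 2 10 := by
  unfold ck31Orth
  rw [Fin.sum_univ_three, show ck31 2 0 = (0 : ℝ) from rfl, show ck31 2 1 = (0 : ℝ) from rfl, show ck31 2 2 = (1 : ℝ) from rfl, show ck31 10 0 = (1 : ℝ) from rfl, show ck31 10 1 = (2 : ℝ) from rfl, show ck31 10 2 = (0 : ℝ) from rfl]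
  norm_num

lemma o_3_4 : ck31Orth 3 4 := by
  unfold ck31Orth
  rw [Fin.sum_univ_three, show ck31 3 0 = (1 : ℝ) from rfl, show ck31 3 1 = (1 : ℝ) from rfl, show ck31 3 2 = (0 : ℝ) from rfl, show ck31 4 0 = (-1 : ℝ) from rfl, show ck31 4 1 = (1 : ℝ) from rfl, show ck31 4 2 = (0 : ℝ) from rfl]
  norm_num

lemma o_3_14 : ck31Orth 3 14 := by
  unfold ck31Orth
  rw [Fin.sum_univ_three, show ck31 3 0 = (1 : ℝ) from rfl, show ck31 3 1 = (1 : ℝ) from rfl, show ck31 3 2 = (0 : ℝ) from rfl, show ck31 14 0 = (-1 : ℝ) from rfl, show ck31 14 1 = (1 : ℝ) from rfl, show ck31 14 2 = (1 : ℝ) from rfl]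
  norm_num

lemma o_3_15 : ck31Orth 3 15 := by
  unfold ck31Orth
  rw [Fin.sum_univ_three, show ck31 3 0 = (1 : ℝ) from rfl, show ck31 3 1 = (1 : ℝ) from rfl, show ck31 3 2 = (0 : ℝ) from rfl, show ck31 15 0 = (1 : ℝ) from rfl, show ck31 15 1 = (-1 : ℝ) from rfl, show ck31 15 2 = (1 : ℝ) from rfl]
  norm_num

lemma o_3_28 : ck31Orth 3 28 := by
  unfold ck31Orth
  rw [Fin.sum_univ_three, show ck31 3 0 = (1 : ℝ) from rfl, show ck31 3 1 = (1 : ℝ) from rfl, show ck31 3 2 = (0 : ℝ) from rfl, show ck31 28 0 = (-1 : ℝ) from rfl, show ck31 28 1 = (1 : ℝ) from rfl, show ck31 28 2 = (2 : ℝ) from rfl]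
  norm_num

lemma o_3_29 : ck31Orth 3 29 := by
  unfold ck31Orth
  rw [Fin.sum_univ_three, show ck31 3 0 = (1 : ℝ) from rfl, show ck31 3 1 = (1 : ℝ) from rfl, show ck31 3 2 = (0 : ℝ) from rfl, show ck31 29 0 = (1 : ℝ) from rfl, show ck31 29 1 = (-1 : ℝ) from rfl, show ck31 29 2 = (2 : ℝ) from rfl]
  norm_num

lemma o_4_13 : ck31Orth 4 13 := by
  unfold ck31Orth
  rw [Fin.sum_univ_three, show ck31 4 0 = (-1 : ℝ) from rfl, show ck31 4 1 = (1 : ℝ) from rfl, show ck31 4 2 = (0 : ℝ) from rfl, show ck31 13 0 = (1 : ℝ) from rfl, show ck31 13 1 = (1 : ℝ) from rfl, show ck31 13 2 = (1 : ℝ) from rfl]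
  norm_num

lemma o_4_16 : ck31Orth 4 16 := by
  unfold ck31Orth
  rw [Fin.sum_univ_three, show ck31 4 0 = (-1 : ℝ) from rfl, show ck31 4 1 = (1 : ℝ) from rfl, show ck31 4 2 = (0 : ℝ) from rfl, show ck31 16 0 = (1 : ℝ) from rfl, show ck31 16 1 = (1 : ℝ) from rfl, show ck31 16 2 = (-1 : ℝ) from rfl]
  norm_num

lemma o_4_27 : ck31Orth 4 27 := by
  unfold ck31Orth
  rw [Fin.sum_univ_three, show ck31 4 0 = (-1 : ℝ) from rfl, show ck31 4 1 = (1 : ℝ) from rfl, show ck31 4 2 = (0 : ℝ) from rfl, show ck31 27 0 = (1 : ℝ) from rfl, show ck31 27 1 = (1 : ℝ) from rfl, show ck31 27 2 = (2 : ℝ) from rfl]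
  norm_num

lemma o_4_30 : ck31Orth 4 30 := by
  unfold ck31Orth
  rw [Fin.sum_univ_three, show ck31 4 0 = (-1 : ℝ) from rfl, show ck31 4 1 = (1 : ℝ) from rfl, show ck31 4 2 = (0 : ℝ) from rfl, show ck31 30 0 = (1 : ℝ) from rfl, show ck31 30 1 = (1 : ℝ) from rfl, show ck31 30 2 = (-2 : ℝ) from rfl]
  norm_num

lemma o_5_6 : ck31Orth 5 6 := by
  unfold ck31Orth
  rw [Fin.sum_univ_three, show ck31 5 0 = (1 : ℝ) from rfl, show ck31 5 1 = (0 : ℝ) from rfl, show ck31 5 2 = (1 : ℝ) from rfl, show ck31 6 0 = (1 : ℝ) from rfl, show ck31 6 1 = (0 : ℝ) from rfl, show ck31 6 2 = (-1 : ℝ) from rfl]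
  norm_num

lemma o_5_14 : ck31Orth 5 14 := by
  unfold ck31Orth
  rw [Fin.sum_univ_three, show ck31 5 0 = (1 : ℝ) from rfl, show ck31 5 1 = (0 : ℝ) from rfl, show ck31 5 2 = (1 : ℝ) from rfl, show ck31 14 0 = (-1 : ℝ) from rfl, show ck31 14 1 = (1 : ℝ) from rfl, show ck31 14 2 = (1 : ℝ) from rfl]
  norm_num

lemma o_5_16 : ck31Orth 5 16 := by
  unfold ck31Orth
  rw [Fin.sum_univ_three, show ck31 5 0 = (1 : ℝ) from rfl, show ck31 5 1 = (0 : ℝ) from rfl, show ck31 5 2 = (1 : ℝ) from rfl, show ck31 16 0 = (1 : ℝ) from rfl, show ck31 16 1 = (1 : ℝ) from rfl, show ck31 16 2 = (-1 : ℝ) from rfl]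
  norm_num

lemma o_5_26 : ck31Orth 5 26 := by
  unfold ck31Orth
  rw [Fin.sum_univ_three, show ck31 5 0 = (1 : ℝ) from rfl, show ck31 5 1 = (0 : ℝ) from rfl, show ck31 5 2 = (1 : ℝ) from rfl, show ck31 26 0 = (1 : ℝ) from rfl, show ck31 26 1 = (2 : ℝ) from rfl, show ck31 26 2 = (-1 : ℝ) from rfl]
  norm_num

lemma o_6_13 : ck31Orth 6 13 := by
  unfold ck31Orth
  rw [Fin.sum_univ_three, show ck31 6 0 = (1 : ℝ) from rfl, show ck31 6 1 = (0 : ℝ) from rfl, show ck31 6 2 = (-1 : ℝ) from rfl, show ck31 13 0 = (1 : ℝ) from rfl, show ck31 13 1 = (1 : ℝ) from rfl, show ck31 13 2 = (1 : ℝ) from rfl]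
  norm_num

lemma o_6_15 : ck31Orth 6 15 := by
  unfold ck31Orth
  rw [Fin.sum_univ_three, show ck31 6 0 = (1 : ℝ) from rfl, show ck31 6 1 = (0 : ℝ) from rfl, show ck31 6 2 = (-1 : ℝ) from rfl, show ck31 15 0 = (1 : ℝ) from rfl, show ck31 15 1 = (-1 : ℝ) from rfl, show ck31 15 2 = (1 : ℝ) from rfl]
  norm_num

lemma o_6_25 : ck31Orth 6 25 := by
  unfold ck31Orth
  rw [Fin.sum_univ_three, show ck31 6 0 = (1 : ℝ) from rfl, show ck31 6 1 = (0 : ℝ) from rfl, show ck31 6 2 = (-1 : ℝ) from rfl, show ck31 25 0 = (1 : ℝ) from rfl, show ck31 25 1 = (2 : ℝ) from rfl, show ck31 25 2 = (1 : ℝ) from rfl]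
  norm_num

lemma o_7_8 : ck31Orth 7 8 := by
  unfold ck31Orth
  rw [Fin.sum_univ_three, show ck31 7 0 = (0 : ℝ) from rfl, show ck31 7 1 = (1 : ℝ) from rfl, show ck31 7 2 = (1 : ℝ) from rfl, show ck31 8 0 = (0 : ℝ) from rfl, show ck31 8 1 = (-1 : ℝ) from rfl, show ck31 8 2 = (1 : ℝ) from rfl]
  norm_num

lemma o_7_15 : ck31Orth 7 15 := by
  unfold ck31Orth
  rw [Fin.sum_univ_three, show ck31 7 0 = (0 : ℝ) from rfl, show ck31 7 1 = (1 : ℝ) from rfl, show ck31 7 2 = (1 : ℝ) from rfl, show ck31 15 0 = (1 : ℝ) from rfl, show ck31 15 1 = (-1 : ℝ) from rfl, show ck31 15 2 = (1 : ℝ) from rfl]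
  norm_num

lemma o_7_16 : ck31Orth 7 16 := by
  unfold ck31Orth
  rw [Fin.sum_univ_three, show ck31 7 0 = (0 : ℝ) from rfl, show ck31 7 1 = (1 : ℝ) from rfl, show ck31 7 2 = (1 : ℝ) from rfl, show ck31 16 0 = (1 : ℝ) from rfl, show ck31 16 1 = (1 : ℝ) from rfl, show ck31 16 2 = (-1 : ℝ) from rfl]
  norm_num

lemma o_7_24 : ck31Orth 7 24 := by
  unfold ck31Orth
  rw [Fin.sum_univ_three, show ck31 7 0 = (0 : ℝ) from rfl, show ck31 7 1 = (1 : ℝ) from rfl, show ck31 7 2 = (1 : ℝ) from rfl, show ck31 24 0 = (2 : ℝ) from rfl, show ck31 24 1 = (-1 : ℝ) from rfl, show ck31 24 2 = (1 : ℝ) from rfl]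
  norm_num

lemma o_8_13 : ck31Orth 8 13 := by
  unfold ck31Orth
  rw [Fin.sum_univ_three, show ck31 8 0 = (0 : ℝ) from rfl, show ck31 8 1 = (-1 : ℝ) from rfl, show ck31 8 2 = (1 : ℝ) from rfl, show ck31 13 0 = (1 : ℝ) from rfl, show ck31 13 1 = (1 : ℝ) from rfl, show ck31 13 2 = (1 : ℝ) from rfl]
  norm_num

lemma o_8_14 : ck31Orth 8 14 := by
  unfold ck31Orth
  rw [Fin.sum_univ_three, show ck31 8 0 = (0 : ℝ) from rfl, show ck31 8 1 = (-1 : ℝ) from rfl, show ck31 8 2 = (1 : ℝ) from rfl, show ck31 14 0 = (-1 : ℝ) from rfl, show ck31 14 1 = (1 : ℝ) from rfl, show ck31 14 2 = (1 : ℝ) from rfl]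
  norm_num

lemma o_8_23 : ck31Orth 8 23 := by
  unfold ck31Orth
  rw [Fin.sum_univ_three, show ck31 8 0 = (0 : ℝ) from rfl, show ck31 8 1 = (-1 : ℝ) from rfl, show ck31 8 2 = (1 : ℝ) from rfl, show ck31 23 0 = (-2 : ℝ) from rfl, show ck31 23 1 = (1 : ℝ) from rfl, show ck31 23 2 = (1 : ℝ) from rfl]
  norm_num

lemma o_9_10 : ck31Orth 9 10 := by
  unfold ck31Orth
  rw [Fin.sum_univ_three, show ck31 9 0 = (-2 : ℝ) from rfl, show ck31 9 1 = (1 : ℝ) from rfl, show ck31 9 2 = (0 : ℝ) from rfl, show ck31 10 0 = (1 : ℝ) from rfl, show ck31 10 1 = (2 : ℝ) from rfl, show ck31 10 2 = (0 : ℝ) from rfl]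
  norm_num

lemma o_9_25 : ck31Orth 9 25 := by
  unfold ck31Orth
  rw [Fin.sum_univ_three, show ck31 9 0 = (-2 : ℝ) from rfl, show ck31 9 1 = (1 : ℝ) from rfl, show ck31 9 2 = (0 : ℝ) from rfl, show ck31 25 0 = (1 : ℝ) from rfl, show ck31 25 1 = (2 : ℝ) from rfl, show ck31 25 2 = (1 : ℝ) from rfl]
  norm_num

lemma o_9_26 : ck31Orth 9 26 := by
  unfold ck31Orth
  rw [Fin.sum_univ_three, show ck31 9 0 = (-2 : ℝ) from rfl, show ck31 9 1 = (1 : ℝ) from rfl, show ck31 9 2 = (0 : ℝ) from rfl, show ck31 26 0 = (1 : ℝ) from rfl, show ck31 26 1 = (2 : ℝ) from rfl, show ck31 26 2 = (-1 : ℝ) from rfl]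
  norm_num

lemma o_10_23 : ck31Orth 10 23 := by
  unfold ck31Orth
  rw [Fin.sum_univ_three, show ck31 10 0 = (1 : ℝ) from rfl, show ck31 10 1 = (2 : ℝ) from rfl, show ck31 10 2 = (0 : ℝ) from rfl, show ck31 23 0 = (-2 : ℝ) from rfl, show ck31 23 1 = (1 : ℝ) from rfl, show ck31 23 2 = (1 : ℝ) from rfl]
  norm_num

lemma o_10_24 : ck31Orth 10 24 := by
  unfold ck31Orth
  rw [Fin.sum_univ_three, show ck31 10 0 = (1 : ℝ) from rfl, show ck31 10 1 = (2 : ℝ) from rfl, show ck31 10 2 = (0 : ℝ) from rfl, show ck31 24 0 = (2 : ℝ) from rfl, show ck31 24 1 = (-1 : ℝ) from rfl, show ck31 24 2 = (1 : ℝ) from rfl]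
  norm_num

lemma o_11_20 : ck31Orth 11 20 := by
  unfold ck31Orth
  rw [Fin.sum_univ_three, show ck31 11 0 = (2 : ℝ) from rfl, show ck31 11 1 = (0 : ℝ) from rfl, show ck31 11 2 = (1 : ℝ) from rfl, show ck31 20 0 = (1 : ℝ) from rfl, show ck31 20 1 = (0 : ℝ) from rfl, show ck31 20 2 = (-2 : ℝ) from rfl]
  norm_num

lemma o_11_28 : ck31Orth 11 28 := by
  unfold ck31Orth
  rw [Fin.sum_univ_three, show ck31 11 0 = (2 : ℝ) from rfl, show ck31 11 1 = (0 : ℝ) from rfl, show ck31 11 2 = (1 : ℝ) from rfl, show ck31 28 0 = (-1 : ℝ) from rfl, show ck31 28 1 = (1 : ℝ) from rfl, show ck31 28 2 = (2 : ℝ) from rfl]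
  norm_num

lemma o_11_30 : ck31Orth 11 30 := by
  unfold ck31Orth
  rw [Fin.sum_univ_three, show ck31 11 0 = (2 : ℝ) from rfl, show ck31 11 1 = (0 : ℝ) from rfl, show ck31 11 2 = (1 : ℝ) from rfl, show ck31 30 0 = (1 : ℝ) from rfl, show ck31 30 1 = (1 : ℝ) from rfl, show ck31 30 2 = (-2 : ℝ) from rfl]
  norm_num

lemma o_12_19 : ck31Orth 12 19 := by
  unfold ck31Orth
  rw [Fin.sum_univ_three, show ck31 12 0 = (-2 : ℝ) from rfl, show ck31 12 1 = (0 : ℝ) from rfl, show ck31 12 2 = (1 : ℝ) from rfl, show ck31 19 0 = (1 : ℝ) from rfl, show ck31 19 1 = (0 : ℝ) from rfl, show ck31 19 2 = (2 : ℝ) from rfl]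
  norm_num

lemma o_12_27 : ck31Orth 12 27 := by
  unfold ck31Orth
  rw [Fin.sum_univ_three, show ck31 12 0 = (-2 : ℝ) from rfl, show ck31 12 1 = (0 : ℝ) from rfl, show ck31 12 2 = (1 : ℝ) from rfl, show ck31 27 0 = (1 : ℝ) from rfl, show ck31 27 1 = (1 : ℝ) from rfl, show ck31 27 2 = (2 : ℝ) from rfl]
  norm_num

lemma o_12_29 : ck31Orth 12 29 := by
  unfold ck31Orth
  rw [Fin.sum_univ_three, show ck31 12 0 = (-2 : ℝ) from rfl, show ck31 12 1 = (0 : ℝ) from rfl, show ck31 12 2 = (1 : ℝ) from rfl, show ck31 29 0 = (1 : ℝ) from rfl, show ck31 29 1 = (-1 : ℝ) from rfl, show ck31 29 2 = (2 : ℝ) from rfl]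
  norm_num

lemma o_13_23 : ck31Orth 13 23 := by
  unfold ck31Orth
  rw [Fin.sum_univ_three, show ck31 13 0 = (1 : ℝ) from rfl, show ck31 13 1 = (1 : ℝ) from rfl, show ck31 13 2 = (1 : ℝ) from rfl, show ck31 23 0 = (-2 : ℝ) from rfl, show ck31 23 1 = (1 : ℝ) from rfl, show ck31 23 2 = (1 : ℝ) from rfl]
  norm_num

lemma o_13_30 : ck31Orth 13 30 := by
  unfold ck31Orth
  rw [Fin.sum_univ_three, show ck31 13 0 = (1 : ℝ) from rfl, show ck31 13 1 = (1 : ℝ) from rfl, show ck31 13 2 = (1 : ℝ) from rfl, show ck31 30 0 = (1 : ℝ) from rfl, show ck31 30 1 = (1 : ℝ) from rfl, show ck31 30 2 = (-2 : ℝ) from rfl]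
  norm_num

lemma o_14_26 : ck31Orth 14 26 := by
  unfold ck31Orth
  rw [Fin.sum_univ_three, show ck31 14 0 = (-1 : ℝ) from rfl, show ck31 14 1 = (1 : ℝ) from rfl, show ck31 14 2 = (1 : ℝ) from rfl, show ck31 26 0 = (1 : ℝ) from rfl, show ck31 26 1 = (2 : ℝ) from rfl, show ck31 26 2 = (-1 : ℝ) from rfl]
  norm_num

lemma o_14_29 : ck31Orth 14 29 := by
  unfold ck31Orth
  rw [Fin.sum_univ_three, show ck31 14 0 = (-1 : ℝ) from rfl, show ck31 14 1 = (1 : ℝ) from rfl, show ck31 14 2 = (1 : ℝ) from rfl, show ck31 29 0 = (1 : ℝ) from rfl, show ck31 29 1 = (-1 : ℝ) from rfl, show ck31 29 2 = (2 : ℝ) from rfl]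
  norm_num

lemma o_15_25 : ck31Orth 15 25 := by
  unfold ck31Orth
  rw [Fin.sum_univ_three, show ck31 15 0 = (1 : ℝ) from rfl, show ck31 15 1 = (-1 : ℝ) from rfl, show ck31 15 2 = (1 : ℝ) from rfl, show ck31 25 0 = (1 : ℝ) from rfl, show ck31 25 1 = (2 : ℝ) from rfl, show ck31 25 2 = (1 : ℝ) from rfl]
  norm_num

lemma o_15_28 : ck31Orth 15 28 := by
  unfold ck31Orth
  rw [Fin.sum_univ_three, show ck31 15 0 = (1 : ℝ) from rfl, show ck31 15 1 = (-1 : ℝ) from rfl, show ck31 15 2 = (1 : ℝ) from rfl, show ck31 28 0 = (-1 : ℝ) from rfl, show ck31 28 1 = (1 : ℝ) from rfl, show ck31 28 2 = (2 : ℝ) from rfl]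
  norm_num

lemma o_16_24 : ck31Orth 16 24 := by
  unfold ck31Orth
  rw [Fin.sum_univ_three, show ck31 16 0 = (1 : ℝ) from rfl, show ck31 16 1 = (1 : ℝ) from rfl, show ck31 16 2 = (-1 : ℝ) from rfl, show ck31 24 0 = (2 : ℝ) from rfl, show ck31 24 1 = (-1 : ℝ) from rfl, show ck31 24 2 = (1 : ℝ) from rfl]
  norm_num

lemma o_16_27 : ck31Orth 16 27 := by
  unfold ck31Orth
  rw [Fin.sum_univ_three, show ck31 16 0 = (1 : ℝ) from rfl, show ck31 16 1 = (1 : ℝ) from rfl, show ck31 16 2 = (-1 : ℝ) from rfl, show ck31 27 0 = (1 : ℝ) from rfl, show ck31 27 1 = (1 : ℝ) from rfl, show ck31 27 2 = (2 : ℝ) from rfl]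
  norm_num

lemma o_17_22 : ck31Orth 17 22 := by
  unfold ck31Orth
  rw [Fin.sum_univ_three, show ck31 17 0 = (0 : ℝ) from rfl, show ck31 17 1 = (2 : ℝ) from rfl, show ck31 17 2 = (1 : ℝ) from rfl, show ck31 22 0 = (0 : ℝ) from rfl, show ck31 22 1 = (1 : ℝ) from rfl, show ck31 22 2 = (-2 : ℝ) from rfl]
  norm_num

lemma o_17_29 : ck31Orth 17 29 := by
  unfold ck31Orth
  rw [Fin.sum_univ_three, show ck31 17 0 = (0 : ℝ) from rfl, show ck31 17 1 = (2 : ℝ) from rfl, show ck31 17 2 = (1 : ℝ) from rfl, show ck31 29 0 = (1 : ℝ) from rfl, show ck31 29 1 = (-1 : ℝ) from rfl, show ck31 29 2 = (2 : ℝ) from rfl]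
  norm_num

lemma o_17_30 : ck31Orth 17 30 := by
  unfold ck31Orth
  rw [Fin.sum_univ_three, show ck31 17 0 = (0 : ℝ) from rfl, show ck31 17 1 = (2 : ℝ) from rfl, show ck31 17 2 = (1 : ℝ) from rfl, show ck31 30 0 = (1 : ℝ) from rfl, show ck31 30 1 = (1 : ℝ) from rfl, show ck31 30 2 = (-2 : ℝ) from rfl]
  norm_num

lemma o_18_21 : ck31Orth 18 21 := by
  unfold ck31Orth
  rw [Fin.sum_univ_three, show ck31 18 0 = (0 : ℝ) from rfl, show ck31 18 1 = (-2 : ℝ) from rfl, show ck31 18 2 = (1 : ℝ) from rfl, show ck31 21 0 = (0 : ℝ) from rfl, show ck31 21 1 = (1 : ℝ) from rfl, show ck31 21 2 = (2 : ℝ) from rfl]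
  norm_num

lemma o_18_27 : ck31Orth 18 27 := by
  unfold ck31Orth
  rw [Fin.sum_univ_three, show ck31 18 0 = (0 : ℝ) from rfl, show ck31 18 1 = (-2 : ℝ) from rfl, show ck31 18 2 = (1 : ℝ) from rfl, show ck31 27 0 = (1 : ℝ) from rfl, show ck31 27 1 = (1 : ℝ) from rfl, show ck31 27 2 = (2 : ℝ) from rfl]
  norm_num

lemma o_18_28 : ck31Orth 18 28 := by
  unfold ck31Orth
  rw [Fin.sum_univ_three, show ck31 18 0 = (0 : ℝ) from rfl, show ck31 18 1 = (-2 : ℝ) from rfl, show ck31 18 2 = (1 : ℝ) from rfl, show ck31 28 0 = (-1 : ℝ) from rfl, show ck31 28 1 = (1 : ℝ) from rfl, show ck31 28 2 = (2 : ℝ) from rfl]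
  norm_num

lemma o_19_23 : ck31Orth 19 23 := by
  unfold ck31Orth
  rw [Fin.sum_univ_three, show ck31 19 0 = (1 : ℝ) from rfl, show ck31 19 1 = (0 : ℝ) from rfl, show ck31 19 2 = (2 : ℝ) from rfl, show ck31 23 0 = (-2 : ℝ) from rfl, show ck31 23 1 = (1 : ℝ) from rfl, show ck31 23 2 = (1 : ℝ) from rfl]
  norm_num

lemma o_20_24 : ck31Orth 20 24 := by
  unfold ck31Orth
  rw [Fin.sum_univ_three, show ck31 20 0 = (1 : ℝ) from rfl, show ck31 20 1 = (0 : ℝ) from rfl, show ck31 20 2 = (-2 : ℝ) from rfl, show ck31 24 0 = (2 : ℝ) from rfl, show ck31 24 1 = (-1 : ℝ) from rfl, show ck31 24 2 = (1 : ℝ) from rfl]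
  norm_num

lemma o_21_26 : ck31Orth 21 26 := by
  unfold ck31Orth
  rw [Fin.sum_univ_three, show ck31 21 0 = (0 : ℝ) from rfl, show ck31 21 1 = (1 : ℝ) from rfl, show ck31 21 2 = (2 : ℝ) from rfl, show ck31 26 0 = (1 : ℝ) from rfl, show ck31 26 1 = (2 : ℝ) from rfl, show ck31 26 2 = (-1 : ℝ) from rfl]
  norm_num

lemma o_22_25 : ck31Orth 22 25 := by
  unfold ck31Orth
  rw [Fin.sum_univ_three, show ck31 22 0 = (0 : ℝ) from rfl, show ck31 22 1 = (1 : ℝ) from rfl, show ck31 22 2 = (-2 : ℝ) from rfl, show ck31 25 0 = (1 : ℝ) from rfl, show ck31 25 1 = (2 : ℝ) from rfl, show ck31 25 2 = (1 : ℝ) from rfl]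
  norm_num


theorem stmt_12 :
    ¬ ∃ f : Fin 31 → ℕ,
        (∀ i, f i = 0 ∨ f i = 1) ∧
        (∀ i j, ck31Orth i j → f i + f j ≤ 1) ∧
        (∀ i j k, i ≠ j → i ≠ k → j ≠ k →
          ck31Orth i j → ck31Orth i k → ck31Orth j k →
          f i + f j + f k = 1) := by
  rintro ⟨f, hf01, h2, h3⟩
  set g : Nat → Bool := fun n => if hn : n < 31 then decide (f ⟨n, hn⟩ = 1) else false with hg
  have gv : ∀ i : Fin 31, g i.val = decide (f i = 1) := by
    intro i
    simp only [hg]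
    rw [dif_pos i.isLt]
  have tn : ∀ x : Fin 31, (decide (f x = 1)).toNat = f x := by
    intro x
    rcases hf01 x with h | h <;> simp [h]
  have hpair : ∀ i j : Fin 31, ck31Orth i j → (!(g i.val && g j.val)) = true := by
    intro i j ho
    have hb := h2 i j ho
    rw [gv, gv]
    rcases hf01 i with hi | hi <;> rcases hf01 j with hj | hj <;>
      simp [hi, hj] <;> omega
  have htriple : ∀ i j k : Fin 31, (i : ℕ) < (j : ℕ) → (j : ℕ) < (k : ℕ) →
      ck31Orth i j → ck31Orth i k → ck31Orth j k →
      ((g i.val).toNat + (g j.val).toNat + (g k.val).toNat == 1) = true := by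
    intro i j k hij hjk o1 o2 o3
    have hne1 : i ≠ j := by intro e; rw [e] at hij; omega
    have hne2 : i ≠ k := by intro e; rw [e] at hij; omega
    have hne3 : j ≠ k := by intro e; rw [e] at hjk; omega
    have hs := h3 i j k hne1 hne2 hne3 o1 o2 o3
    rw [gv, gv, gv]
    simp only [beq_iff_eq, tn]
    exact hs
  have hgP : ∀ p ∈ ksP, (!(g p.1 && g p.2)) = true := by
    intro p hp
    fin_cases hp
    · exact hpair 0 1 o_0_1
    · exact hpair 0 2 o_0_2
    · exact hpair 0 7 o_0_7
    · exact hpair 0 8 o_0_8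
    · exact hpair 0 17 o_0_17
    · exact hpair 0 18 o_0_18
    · exact hpair 0 21 o_0_21
    · exact hpair 0 22 o_0_22
    · exact hpair 1 2 o_1_2
    · exact hpair 1 5 o_1_5
    · exact hpair 1 6 o_1_6
    · exact hpair 1 11 o_1_11
    · exact hpair 1 12 o_1_12
    · exact hpair 1 19 o_1_19
    · exact hpair 1 20 o_1_20
    · exact hpair 2 3 o_2_3
    · exact hpair 2 4 o_2_4
    · exact hpair 2 9 o_2_9
    · exact hpair 2 10 o_2_10
    · exact hpair 3 4 o_3_4
    · exact hpair 3 14 o_3_14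
    · exact hpair 3 15 o_3_15
    · exact hpair 3 28 o_3_28
    · exact hpair 3 29 o_3_29
    · exact hpair 4 13 o_4_13
    · exact hpair 4 16 o_4_16
    · exact hpair 4 27 o_4_27
    · exact hpair 4 30 o_4_30
    · exact hpair 5 6 o_5_6
    · exact hpair 5 14 o_5_14
    · exact hpair 5 16 o_5_16
    · exact hpair 5 26 o_5_26
    · exact hpair 6 13 o_6_13
    · exact hpair 6 15 o_6_15
    · exact hpair 6 25 o_6_25
    · exact hpair 7 8 o_7_8
    · exact hpair 7 15 o_7_15
    · exact hpair 7 16 o_7_16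
    · exact hpair 7 24 o_7_24
    · exact hpair 8 13 o_8_13
    · exact hpair 8 14 o_8_14
    · exact hpair 8 23 o_8_23
    · exact hpair 9 10 o_9_10
    · exact hpair 9 25 o_9_25
    · exact hpair 9 26 o_9_26
    · exact hpair 10 23 o_10_23
    · exact hpair 10 24 o_10_24
    · exact hpair 11 20 o_11_20
    · exact hpair 11 28 o_11_28
    · exact hpair 11 30 o_11_30
    · exact hpair 12 19 o_12_19
    · exact hpair 12 27 o_12_27
    · exact hpair 12 29 o_12_29
    · exact hpair 13 23 o_13_23
    · exact hpair 13 30 o_13_30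
    · exact hpair 14 26 o_14_26
    · exact hpair 14 29 o_14_29
    · exact hpair 15 25 o_15_25
    · exact hpair 15 28 o_15_28
    · exact hpair 16 24 o_16_24
    · exact hpair 16 27 o_16_27
    · exact hpair 17 22 o_17_22
    · exact hpair 17 29 o_17_29
    · exact hpair 17 30 o_17_30
    · exact hpair 18 21 o_18_21
    · exact hpair 18 27 o_18_27
    · exact hpair 18 28 o_18_28
    · exact hpair 19 23 o_19_23
    · exact hpair 20 24 o_20_24
    · exact hpair 21 26 o_21_26
    · exact hpair 22 25 o_22_25
  have hgT : ∀ p ∈ ksT,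
      ((g p.1).toNat + (g p.2.1).toNat + (g p.2.2).toNat == 1) = true := by
    intro p hp
    fin_cases hp
    · exact htriple 0 1 2 (by decide) (by decide) o_0_1 o_0_2 o_1_2
    · exact htriple 0 7 8 (by decide) (by decide) o_0_7 o_0_8 o_7_8
    · exact htriple 0 17 22 (by decide) (by decide) o_0_17 o_0_22 o_17_22
    · exact htriple 0 18 21 (by decide) (by decide) o_0_18 o_0_21 o_18_21
    · exact htriple 1 5 6 (by decide) (by decide) o_1_5 o_1_6 o_5_6
    · exact htriple 1 11 20 (by decide) (by decide) o_1_11 o_1_20 o_11_20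
    · exact htriple 1 12 19 (by decide) (by decide) o_1_12 o_1_19 o_12_19
    · exact htriple 2 3 4 (by decide) (by decide) o_2_3 o_2_4 o_3_4
    · exact htriple 2 9 10 (by decide) (by decide) o_2_9 o_2_10 o_9_10
    · exact htriple 3 14 29 (by decide) (by decide) o_3_14 o_3_29 o_14_29
    · exact htriple 3 15 28 (by decide) (by decide) o_3_15 o_3_28 o_15_28
    · exact htriple 4 13 30 (by decide) (by decide) o_4_13 o_4_30 o_13_30
    · exact htriple 4 16 27 (by decide) (by decide) o_4_16 o_4_27 o_16_27
    · exact htriple 5 14 26 (by decide) (by decide) o_5_14 o_5_26 o_14_26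
    · exact htriple 6 15 25 (by decide) (by decide) o_6_15 o_6_25 o_15_25
    · exact htriple 7 16 24 (by decide) (by decide) o_7_16 o_7_24 o_16_24
    · exact htriple 8 13 23 (by decide) (by decide) o_8_13 o_8_23 o_13_23
  have := search_true g hgP hgT 31 0 0 (by norm_num)
    (fun i hi => absurd hi (Nat.not_lt_zero i))
  rw [ksKey] at this
  exact Bool.false_ne_true this
end

section
/- The 13 vectors of the Yu–Oh set in ℝ^3, namely (1,0,0), (0,1,0), (0,0,1), (0,1,−1), (1,0,−1), (1,−1,0), (0,1,1), (1,0,1), (1,1,0), (−1,1,1), (1,−1,1), (1,1,−1), (1,1,1), admit a KS assignment: there exists f : {1,...,13} → {0,1} with f(i) + f(j) ≤ 1 for orthogonal pairs and f(i) + f(j) + f(k) = 1 for each triple of mutually orthogonal vectors in the set. -/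
/-- The 13 vectors of the Yu–Oh set in `ℝ^3`. -/
def yuOh : Fin 13 → Fin 3 → ℝ :=
  ![![1, 0, 0], ![0, 1, 0], ![0, 0, 1], ![0, 1, -1], ![1, 0, -1],
    ![1, -1, 0], ![0, 1, 1], ![1, 0, 1], ![1, 1, 0], ![-1, 1, 1],
    ![1, -1, 1], ![1, 1, -1], ![1, 1, 1]]

/-- Orthogonality with respect to the standard inner product on `ℝ^3`. -/
def yuOhOrth (i j : Fin 13) : Prop := ∑ t : Fin 3, yuOh i t * yuOh j t = 0

def yuOhZ : Fin 13 → Fin 3 → ℤ :=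
  ![![1, 0, 0], ![0, 1, 0], ![0, 0, 1], ![0, 1, -1], ![1, 0, -1],
    ![1, -1, 0], ![0, 1, 1], ![1, 0, 1], ![1, 1, 0], ![-1, 1, 1],
    ![1, -1, 1], ![1, 1, -1], ![1, 1, 1]]

lemma yuOh_cast (i : Fin 13) (t : Fin 3) : yuOh i t = (yuOhZ i t : ℝ) := by
  fin_cases i <;> fin_cases t <;> norm_num [yuOh, yuOhZ]

lemma orth_iff (i j : Fin 13) :
    yuOhOrth i j ↔ ∑ t : Fin 3, yuOhZ i t * yuOhZ j t = 0 := by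
  unfold yuOhOrth
  simp only [yuOh_cast]
  exact_mod_cast Iff.rfl

def fKS : Fin 13 → ℕ := ![0, 0, 1, 0, 0, 0, 1, 1, 0, 0, 0, 0, 0]

theorem stmt_13 :
    ∃ f : Fin 13 → ℕ,
      (∀ i, f i = 0 ∨ f i = 1) ∧
      (∀ i j, yuOhOrth i j → f i + f j ≤ 1) ∧
      (∀ i j k, i ≠ j → i ≠ k → j ≠ k →
        yuOhOrth i j → yuOhOrth i k → yuOhOrth j k →
        f i + f j + f k = 1) := by
  refine ⟨fKS, ?_, ?_, ?_⟩
  · decide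
  · intro i j h
    rw [orth_iff] at h
    revert h
    revert i j
    decide
  · intro i j k hij hik hjk h1 h2 h3
    rw [orth_iff] at h1 h2 h3
    revert h1 h2 h3
    revert hij hik hjk
    revert i j k
    decide
end

section
/- Let G be the orthogonality graph of the CK-31 vectors (31 vertices, with vertices i and j adjacent iff v_i ⊥ v_j in ℝ^3, using the listed CK-31 vectors). Then the set A_0 = {1, 2, 3, 17} 2-percolates G: defining A_k = A_{k-1} ∪ {v : v has at least 2 neighbors in A_{k-1}}, one has A_5 = V(G). -/
/-- Adjacency in the orthogonality graph of CK-31. -/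
def ck31Adj (i j : Fin 31) : Prop :=
  i ≠ j ∧ ∑ t : Fin 3, ck31 i t * ck31 j t = 0

/-- One round of 2-neighbor bootstrap percolation on the CK-31 orthogonality graph. -/
def infectStep (A : Set (Fin 31)) : Set (Fin 31) :=
  A ∪ {v | ∃ w₁ w₂, w₁ ≠ w₂ ∧ w₁ ∈ A ∧ w₂ ∈ A ∧ ck31Adj v w₁ ∧ ck31Adj v w₂}

theorem stmt_18 :
    infectStep^[5] ({0, 1, 2, 16} : Set (Fin 31)) = Set.univ := by
  set S : Set (Fin 31) := {0, 1, 2, 16} with hS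
  have key : ∀ n (v : Fin 31), v ∈ infectStep^[n] S → v ∈ infectStep^[n+1] S := by
    intro n v h
    rw [Function.iterate_succ_apply']
    exact Or.inl h
  have hnew : ∀ n (v w₁ w₂ : Fin 31), w₁ ≠ w₂ → w₁ ∈ infectStep^[n] S → w₂ ∈ infectStep^[n] S →
      ck31Adj v w₁ → ck31Adj v w₂ → v ∈ infectStep^[n+1] S := by
    intro n v w₁ w₂ h h1 h2 a1 a2
    rw [Function.iterate_succ_apply']
    exact Or.inr ⟨w₁, w₂, h, h1, h2, a1, a2⟩
  have adj_4_2 : ck31Adj 4 2 := ⟨by decide, by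
      show ∑ t : Fin 3, (![(-1), 1, 0] : Fin 3 → ℝ) t * (![0, 0, 1] : Fin 3 → ℝ) t = 0
      norm_num [Fin.sum_univ_three, Matrix.cons_val_two]⟩
  have adj_4_16 : ck31Adj 4 16 := ⟨by decide, by
      show ∑ t : Fin 3, (![(-1), 1, 0] : Fin 3 → ℝ) t * (![1, 1, (-1)] : Fin 3 → ℝ) t = 0
      norm_num [Fin.sum_univ_three, Matrix.cons_val_two]⟩
  have adj_5_1 : ck31Adj 5 1 := ⟨by decide, by
      show ∑ t : Fin 3, (![1, 0, 1] : Fin 3 → ℝ) t * (![0, 1, 0] : Fin 3 → ℝ) t = 0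
      norm_num [Fin.sum_univ_three, Matrix.cons_val_two]⟩
  have adj_5_16 : ck31Adj 5 16 := ⟨by decide, by
      show ∑ t : Fin 3, (![1, 0, 1] : Fin 3 → ℝ) t * (![1, 1, (-1)] : Fin 3 → ℝ) t = 0
      norm_num [Fin.sum_univ_three, Matrix.cons_val_two]⟩
  have adj_7_0 : ck31Adj 7 0 := ⟨by decide, by
      show ∑ t : Fin 3, (![0, 1, 1] : Fin 3 → ℝ) t * (![1, 0, 0] : Fin 3 → ℝ) t = 0
      norm_num [Fin.sum_univ_three, Matrix.cons_val_two]⟩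
  have adj_7_16 : ck31Adj 7 16 := ⟨by decide, by
      show ∑ t : Fin 3, (![0, 1, 1] : Fin 3 → ℝ) t * (![1, 1, (-1)] : Fin 3 → ℝ) t = 0
      norm_num [Fin.sum_univ_three, Matrix.cons_val_two]⟩
  have adj_3_2 : ck31Adj 3 2 := ⟨by decide, by
      show ∑ t : Fin 3, (![1, 1, 0] : Fin 3 → ℝ) t * (![0, 0, 1] : Fin 3 → ℝ) t = 0
      norm_num [Fin.sum_univ_three, Matrix.cons_val_two]⟩
  have adj_3_4 : ck31Adj 3 4 := ⟨by decide, by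
      show ∑ t : Fin 3, (![1, 1, 0] : Fin 3 → ℝ) t * (![(-1), 1, 0] : Fin 3 → ℝ) t = 0
      norm_num [Fin.sum_univ_three, Matrix.cons_val_two]⟩
  have adj_6_1 : ck31Adj 6 1 := ⟨by decide, by
      show ∑ t : Fin 3, (![1, 0, (-1)] : Fin 3 → ℝ) t * (![0, 1, 0] : Fin 3 → ℝ) t = 0
      norm_num [Fin.sum_univ_three, Matrix.cons_val_two]⟩
  have adj_6_5 : ck31Adj 6 5 := ⟨by decide, by
      show ∑ t : Fin 3, (![1, 0, (-1)] : Fin 3 → ℝ) t * (![1, 0, 1] : Fin 3 → ℝ) t = 0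
      norm_num [Fin.sum_univ_three, Matrix.cons_val_two]⟩
  have adj_8_0 : ck31Adj 8 0 := ⟨by decide, by
      show ∑ t : Fin 3, (![0, (-1), 1] : Fin 3 → ℝ) t * (![1, 0, 0] : Fin 3 → ℝ) t = 0
      norm_num [Fin.sum_univ_three, Matrix.cons_val_two]⟩
  have adj_8_7 : ck31Adj 8 7 := ⟨by decide, by
      show ∑ t : Fin 3, (![0, (-1), 1] : Fin 3 → ℝ) t * (![0, 1, 1] : Fin 3 → ℝ) t = 0
      norm_num [Fin.sum_univ_three, Matrix.cons_val_two]⟩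
  have adj_24_16 : ck31Adj 24 16 := ⟨by decide, by
      show ∑ t : Fin 3, (![2, (-1), 1] : Fin 3 → ℝ) t * (![1, 1, (-1)] : Fin 3 → ℝ) t = 0
      norm_num [Fin.sum_univ_three, Matrix.cons_val_two]⟩
  have adj_24_7 : ck31Adj 24 7 := ⟨by decide, by
      show ∑ t : Fin 3, (![2, (-1), 1] : Fin 3 → ℝ) t * (![0, 1, 1] : Fin 3 → ℝ) t = 0
      norm_num [Fin.sum_univ_three, Matrix.cons_val_two]⟩
  have adj_27_16 : ck31Adj 27 16 := ⟨by decide, by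
      show ∑ t : Fin 3, (![1, 1, 2] : Fin 3 → ℝ) t * (![1, 1, (-1)] : Fin 3 → ℝ) t = 0
      norm_num [Fin.sum_univ_three, Matrix.cons_val_two]⟩
  have adj_27_4 : ck31Adj 27 4 := ⟨by decide, by
      show ∑ t : Fin 3, (![1, 1, 2] : Fin 3 → ℝ) t * (![(-1), 1, 0] : Fin 3 → ℝ) t = 0
      norm_num [Fin.sum_univ_three, Matrix.cons_val_two]⟩
  have adj_10_2 : ck31Adj 10 2 := ⟨by decide, by
      show ∑ t : Fin 3, (![1, 2, 0] : Fin 3 → ℝ) t * (![0, 0, 1] : Fin 3 → ℝ) t = 0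
      norm_num [Fin.sum_univ_three, Matrix.cons_val_two]⟩
  have adj_10_24 : ck31Adj 10 24 := ⟨by decide, by
      show ∑ t : Fin 3, (![1, 2, 0] : Fin 3 → ℝ) t * (![2, (-1), 1] : Fin 3 → ℝ) t = 0
      norm_num [Fin.sum_univ_three, Matrix.cons_val_two]⟩
  have adj_12_1 : ck31Adj 12 1 := ⟨by decide, by
      show ∑ t : Fin 3, (![(-2), 0, 1] : Fin 3 → ℝ) t * (![0, 1, 0] : Fin 3 → ℝ) t = 0
      norm_num [Fin.sum_univ_three, Matrix.cons_val_two]⟩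
  have adj_12_27 : ck31Adj 12 27 := ⟨by decide, by
      show ∑ t : Fin 3, (![(-2), 0, 1] : Fin 3 → ℝ) t * (![1, 1, 2] : Fin 3 → ℝ) t = 0
      norm_num [Fin.sum_univ_three, Matrix.cons_val_two]⟩
  have adj_13_4 : ck31Adj 13 4 := ⟨by decide, by
      show ∑ t : Fin 3, (![1, 1, 1] : Fin 3 → ℝ) t * (![(-1), 1, 0] : Fin 3 → ℝ) t = 0
      norm_num [Fin.sum_univ_three, Matrix.cons_val_two]⟩
  have adj_13_6 : ck31Adj 13 6 := ⟨by decide, by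
      show ∑ t : Fin 3, (![1, 1, 1] : Fin 3 → ℝ) t * (![1, 0, (-1)] : Fin 3 → ℝ) t = 0
      norm_num [Fin.sum_univ_three, Matrix.cons_val_two]⟩
  have adj_14_3 : ck31Adj 14 3 := ⟨by decide, by
      show ∑ t : Fin 3, (![(-1), 1, 1] : Fin 3 → ℝ) t * (![1, 1, 0] : Fin 3 → ℝ) t = 0
      norm_num [Fin.sum_univ_three, Matrix.cons_val_two]⟩
  have adj_14_5 : ck31Adj 14 5 := ⟨by decide, by
      show ∑ t : Fin 3, (![(-1), 1, 1] : Fin 3 → ℝ) t * (![1, 0, 1] : Fin 3 → ℝ) t = 0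
      norm_num [Fin.sum_univ_three, Matrix.cons_val_two]⟩
  have adj_15_3 : ck31Adj 15 3 := ⟨by decide, by
      show ∑ t : Fin 3, (![1, (-1), 1] : Fin 3 → ℝ) t * (![1, 1, 0] : Fin 3 → ℝ) t = 0
      norm_num [Fin.sum_univ_three, Matrix.cons_val_two]⟩
  have adj_15_6 : ck31Adj 15 6 := ⟨by decide, by
      show ∑ t : Fin 3, (![1, (-1), 1] : Fin 3 → ℝ) t * (![1, 0, (-1)] : Fin 3 → ℝ) t = 0
      norm_num [Fin.sum_univ_three, Matrix.cons_val_two]⟩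
  have adj_18_0 : ck31Adj 18 0 := ⟨by decide, by
      show ∑ t : Fin 3, (![0, (-2), 1] : Fin 3 → ℝ) t * (![1, 0, 0] : Fin 3 → ℝ) t = 0
      norm_num [Fin.sum_univ_three, Matrix.cons_val_two]⟩
  have adj_18_27 : ck31Adj 18 27 := ⟨by decide, by
      show ∑ t : Fin 3, (![0, (-2), 1] : Fin 3 → ℝ) t * (![1, 1, 2] : Fin 3 → ℝ) t = 0
      norm_num [Fin.sum_univ_three, Matrix.cons_val_two]⟩
  have adj_20_1 : ck31Adj 20 1 := ⟨by decide, by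
      show ∑ t : Fin 3, (![1, 0, (-2)] : Fin 3 → ℝ) t * (![0, 1, 0] : Fin 3 → ℝ) t = 0
      norm_num [Fin.sum_univ_three, Matrix.cons_val_two]⟩
  have adj_20_24 : ck31Adj 20 24 := ⟨by decide, by
      show ∑ t : Fin 3, (![1, 0, (-2)] : Fin 3 → ℝ) t * (![2, (-1), 1] : Fin 3 → ℝ) t = 0
      norm_num [Fin.sum_univ_three, Matrix.cons_val_two]⟩
  have adj_9_2 : ck31Adj 9 2 := ⟨by decide, by
      show ∑ t : Fin 3, (![(-2), 1, 0] : Fin 3 → ℝ) t * (![0, 0, 1] : Fin 3 → ℝ) t = 0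
      norm_num [Fin.sum_univ_three, Matrix.cons_val_two]⟩
  have adj_9_10 : ck31Adj 9 10 := ⟨by decide, by
      show ∑ t : Fin 3, (![(-2), 1, 0] : Fin 3 → ℝ) t * (![1, 2, 0] : Fin 3 → ℝ) t = 0
      norm_num [Fin.sum_univ_three, Matrix.cons_val_two]⟩
  have adj_11_1 : ck31Adj 11 1 := ⟨by decide, by
      show ∑ t : Fin 3, (![2, 0, 1] : Fin 3 → ℝ) t * (![0, 1, 0] : Fin 3 → ℝ) t = 0
      norm_num [Fin.sum_univ_three, Matrix.cons_val_two]⟩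
  have adj_11_20 : ck31Adj 11 20 := ⟨by decide, by
      show ∑ t : Fin 3, (![2, 0, 1] : Fin 3 → ℝ) t * (![1, 0, (-2)] : Fin 3 → ℝ) t = 0
      norm_num [Fin.sum_univ_three, Matrix.cons_val_two]⟩
  have adj_19_1 : ck31Adj 19 1 := ⟨by decide, by
      show ∑ t : Fin 3, (![1, 0, 2] : Fin 3 → ℝ) t * (![0, 1, 0] : Fin 3 → ℝ) t = 0
      norm_num [Fin.sum_univ_three, Matrix.cons_val_two]⟩
  have adj_19_12 : ck31Adj 19 12 := ⟨by decide, by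
      show ∑ t : Fin 3, (![1, 0, 2] : Fin 3 → ℝ) t * (![(-2), 0, 1] : Fin 3 → ℝ) t = 0
      norm_num [Fin.sum_univ_three, Matrix.cons_val_two]⟩
  have adj_21_0 : ck31Adj 21 0 := ⟨by decide, by
      show ∑ t : Fin 3, (![0, 1, 2] : Fin 3 → ℝ) t * (![1, 0, 0] : Fin 3 → ℝ) t = 0
      norm_num [Fin.sum_univ_three, Matrix.cons_val_two]⟩
  have adj_21_18 : ck31Adj 21 18 := ⟨by decide, by
      show ∑ t : Fin 3, (![0, 1, 2] : Fin 3 → ℝ) t * (![0, (-2), 1] : Fin 3 → ℝ) t = 0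
      norm_num [Fin.sum_univ_three, Matrix.cons_val_two]⟩
  have adj_23_8 : ck31Adj 23 8 := ⟨by decide, by
      show ∑ t : Fin 3, (![(-2), 1, 1] : Fin 3 → ℝ) t * (![0, (-1), 1] : Fin 3 → ℝ) t = 0
      norm_num [Fin.sum_univ_three, Matrix.cons_val_two]⟩
  have adj_23_10 : ck31Adj 23 10 := ⟨by decide, by
      show ∑ t : Fin 3, (![(-2), 1, 1] : Fin 3 → ℝ) t * (![1, 2, 0] : Fin 3 → ℝ) t = 0
      norm_num [Fin.sum_univ_three, Matrix.cons_val_two]⟩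
  have adj_25_6 : ck31Adj 25 6 := ⟨by decide, by
      show ∑ t : Fin 3, (![1, 2, 1] : Fin 3 → ℝ) t * (![1, 0, (-1)] : Fin 3 → ℝ) t = 0
      norm_num [Fin.sum_univ_three, Matrix.cons_val_two]⟩
  have adj_25_15 : ck31Adj 25 15 := ⟨by decide, by
      show ∑ t : Fin 3, (![1, 2, 1] : Fin 3 → ℝ) t * (![1, (-1), 1] : Fin 3 → ℝ) t = 0
      norm_num [Fin.sum_univ_three, Matrix.cons_val_two]⟩
  have adj_26_5 : ck31Adj 26 5 := ⟨by decide, by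
      show ∑ t : Fin 3, (![1, 2, (-1)] : Fin 3 → ℝ) t * (![1, 0, 1] : Fin 3 → ℝ) t = 0
      norm_num [Fin.sum_univ_three, Matrix.cons_val_two]⟩
  have adj_26_14 : ck31Adj 26 14 := ⟨by decide, by
      show ∑ t : Fin 3, (![1, 2, (-1)] : Fin 3 → ℝ) t * (![(-1), 1, 1] : Fin 3 → ℝ) t = 0
      norm_num [Fin.sum_univ_three, Matrix.cons_val_two]⟩
  have adj_28_3 : ck31Adj 28 3 := ⟨by decide, by
      show ∑ t : Fin 3, (![(-1), 1, 2] : Fin 3 → ℝ) t * (![1, 1, 0] : Fin 3 → ℝ) t = 0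
      norm_num [Fin.sum_univ_three, Matrix.cons_val_two]⟩
  have adj_28_15 : ck31Adj 28 15 := ⟨by decide, by
      show ∑ t : Fin 3, (![(-1), 1, 2] : Fin 3 → ℝ) t * (![1, (-1), 1] : Fin 3 → ℝ) t = 0
      norm_num [Fin.sum_univ_three, Matrix.cons_val_two]⟩
  have adj_29_3 : ck31Adj 29 3 := ⟨by decide, by
      show ∑ t : Fin 3, (![1, (-1), 2] : Fin 3 → ℝ) t * (![1, 1, 0] : Fin 3 → ℝ) t = 0
      norm_num [Fin.sum_univ_three, Matrix.cons_val_two]⟩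
  have adj_29_12 : ck31Adj 29 12 := ⟨by decide, by
      show ∑ t : Fin 3, (![1, (-1), 2] : Fin 3 → ℝ) t * (![(-2), 0, 1] : Fin 3 → ℝ) t = 0
      norm_num [Fin.sum_univ_three, Matrix.cons_val_two]⟩
  have adj_30_4 : ck31Adj 30 4 := ⟨by decide, by
      show ∑ t : Fin 3, (![1, 1, (-2)] : Fin 3 → ℝ) t * (![(-1), 1, 0] : Fin 3 → ℝ) t = 0
      norm_num [Fin.sum_univ_three, Matrix.cons_val_two]⟩
  have adj_30_13 : ck31Adj 30 13 := ⟨by decide, by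
      show ∑ t : Fin 3, (![1, 1, (-2)] : Fin 3 → ℝ) t * (![1, 1, 1] : Fin 3 → ℝ) t = 0
      norm_num [Fin.sum_univ_three, Matrix.cons_val_two]⟩
  have adj_17_0 : ck31Adj 17 0 := ⟨by decide, by
      show ∑ t : Fin 3, (![0, 2, 1] : Fin 3 → ℝ) t * (![1, 0, 0] : Fin 3 → ℝ) t = 0
      norm_num [Fin.sum_univ_three, Matrix.cons_val_two]⟩
  have adj_17_29 : ck31Adj 17 29 := ⟨by decide, by
      show ∑ t : Fin 3, (![0, 2, 1] : Fin 3 → ℝ) t * (![1, (-1), 2] : Fin 3 → ℝ) t = 0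
      norm_num [Fin.sum_univ_three, Matrix.cons_val_two]⟩
  have adj_22_0 : ck31Adj 22 0 := ⟨by decide, by
      show ∑ t : Fin 3, (![0, 1, (-2)] : Fin 3 → ℝ) t * (![1, 0, 0] : Fin 3 → ℝ) t = 0
      norm_num [Fin.sum_univ_three, Matrix.cons_val_two]⟩
  have adj_22_25 : ck31Adj 22 25 := ⟨by decide, by
      show ∑ t : Fin 3, (![0, 1, (-2)] : Fin 3 → ℝ) t * (![1, 2, 1] : Fin 3 → ℝ) t = 0
      norm_num [Fin.sum_univ_three, Matrix.cons_val_two]⟩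
  have h0_0 : (0:Fin 31) ∈ infectStep^[0] S := by rw [Function.iterate_zero_apply, hS]; simp
  have h0_1 : (1:Fin 31) ∈ infectStep^[0] S := by rw [Function.iterate_zero_apply, hS]; simp
  have h0_2 : (2:Fin 31) ∈ infectStep^[0] S := by rw [Function.iterate_zero_apply, hS]; simp
  have h0_16 : (16:Fin 31) ∈ infectStep^[0] S := by rw [Function.iterate_zero_apply, hS]; simp
  have h1_0 := key 0 0 h0_0
  have h1_1 := key 0 1 h0_1
  have h1_2 := key 0 2 h0_2
  have h1_16 := key 0 16 h0_16
  have h1_4 := hnew 0 4 2 16 (by decide) h0_2 h0_16 adj_4_2 adj_4_16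
  have h1_5 := hnew 0 5 1 16 (by decide) h0_1 h0_16 adj_5_1 adj_5_16
  have h1_7 := hnew 0 7 0 16 (by decide) h0_0 h0_16 adj_7_0 adj_7_16
  have h2_0 := key 1 0 h1_0
  have h2_1 := key 1 1 h1_1
  have h2_2 := key 1 2 h1_2
  have h2_4 := key 1 4 h1_4
  have h2_5 := key 1 5 h1_5
  have h2_7 := key 1 7 h1_7
  have h2_16 := key 1 16 h1_16
  have h2_3 := hnew 1 3 2 4 (by decide) h1_2 h1_4 adj_3_2 adj_3_4
  have h2_6 := hnew 1 6 1 5 (by decide) h1_1 h1_5 adj_6_1 adj_6_5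
  have h2_8 := hnew 1 8 0 7 (by decide) h1_0 h1_7 adj_8_0 adj_8_7
  have h2_24 := hnew 1 24 16 7 (by decide) h1_16 h1_7 adj_24_16 adj_24_7
  have h2_27 := hnew 1 27 16 4 (by decide) h1_16 h1_4 adj_27_16 adj_27_4
  have h3_0 := key 2 0 h2_0
  have h3_1 := key 2 1 h2_1
  have h3_2 := key 2 2 h2_2
  have h3_3 := key 2 3 h2_3
  have h3_4 := key 2 4 h2_4
  have h3_5 := key 2 5 h2_5
  have h3_6 := key 2 6 h2_6
  have h3_7 := key 2 7 h2_7
  have h3_8 := key 2 8 h2_8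
  have h3_16 := key 2 16 h2_16
  have h3_24 := key 2 24 h2_24
  have h3_27 := key 2 27 h2_27
  have h3_10 := hnew 2 10 2 24 (by decide) h2_2 h2_24 adj_10_2 adj_10_24
  have h3_12 := hnew 2 12 1 27 (by decide) h2_1 h2_27 adj_12_1 adj_12_27
  have h3_13 := hnew 2 13 4 6 (by decide) h2_4 h2_6 adj_13_4 adj_13_6
  have h3_14 := hnew 2 14 3 5 (by decide) h2_3 h2_5 adj_14_3 adj_14_5
  have h3_15 := hnew 2 15 3 6 (by decide) h2_3 h2_6 adj_15_3 adj_15_6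
  have h3_18 := hnew 2 18 0 27 (by decide) h2_0 h2_27 adj_18_0 adj_18_27
  have h3_20 := hnew 2 20 1 24 (by decide) h2_1 h2_24 adj_20_1 adj_20_24
  have h4_0 := key 3 0 h3_0
  have h4_1 := key 3 1 h3_1
  have h4_2 := key 3 2 h3_2
  have h4_3 := key 3 3 h3_3
  have h4_4 := key 3 4 h3_4
  have h4_5 := key 3 5 h3_5
  have h4_6 := key 3 6 h3_6
  have h4_7 := key 3 7 h3_7
  have h4_8 := key 3 8 h3_8
  have h4_10 := key 3 10 h3_10
  have h4_12 := key 3 12 h3_12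
  have h4_13 := key 3 13 h3_13
  have h4_14 := key 3 14 h3_14
  have h4_15 := key 3 15 h3_15
  have h4_16 := key 3 16 h3_16
  have h4_18 := key 3 18 h3_18
  have h4_20 := key 3 20 h3_20
  have h4_24 := key 3 24 h3_24
  have h4_27 := key 3 27 h3_27
  have h4_9 := hnew 3 9 2 10 (by decide) h3_2 h3_10 adj_9_2 adj_9_10
  have h4_11 := hnew 3 11 1 20 (by decide) h3_1 h3_20 adj_11_1 adj_11_20
  have h4_19 := hnew 3 19 1 12 (by decide) h3_1 h3_12 adj_19_1 adj_19_12
  have h4_21 := hnew 3 21 0 18 (by decide) h3_0 h3_18 adj_21_0 adj_21_18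
  have h4_23 := hnew 3 23 8 10 (by decide) h3_8 h3_10 adj_23_8 adj_23_10
  have h4_25 := hnew 3 25 6 15 (by decide) h3_6 h3_15 adj_25_6 adj_25_15
  have h4_26 := hnew 3 26 5 14 (by decide) h3_5 h3_14 adj_26_5 adj_26_14
  have h4_28 := hnew 3 28 3 15 (by decide) h3_3 h3_15 adj_28_3 adj_28_15
  have h4_29 := hnew 3 29 3 12 (by decide) h3_3 h3_12 adj_29_3 adj_29_12
  have h4_30 := hnew 3 30 4 13 (by decide) h3_4 h3_13 adj_30_4 adj_30_13
  have h5_0 := key 4 0 h4_0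
  have h5_1 := key 4 1 h4_1
  have h5_2 := key 4 2 h4_2
  have h5_3 := key 4 3 h4_3
  have h5_4 := key 4 4 h4_4
  have h5_5 := key 4 5 h4_5
  have h5_6 := key 4 6 h4_6
  have h5_7 := key 4 7 h4_7
  have h5_8 := key 4 8 h4_8
  have h5_9 := key 4 9 h4_9
  have h5_10 := key 4 10 h4_10
  have h5_11 := key 4 11 h4_11
  have h5_12 := key 4 12 h4_12
  have h5_13 := key 4 13 h4_13
  have h5_14 := key 4 14 h4_14
  have h5_15 := key 4 15 h4_15
  have h5_16 := key 4 16 h4_16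
  have h5_18 := key 4 18 h4_18
  have h5_19 := key 4 19 h4_19
  have h5_20 := key 4 20 h4_20
  have h5_21 := key 4 21 h4_21
  have h5_23 := key 4 23 h4_23
  have h5_24 := key 4 24 h4_24
  have h5_25 := key 4 25 h4_25
  have h5_26 := key 4 26 h4_26
  have h5_27 := key 4 27 h4_27
  have h5_28 := key 4 28 h4_28
  have h5_29 := key 4 29 h4_29
  have h5_30 := key 4 30 h4_30
  have h5_17 := hnew 4 17 0 29 (by decide) h4_0 h4_29 adj_17_0 adj_17_29
  have h5_22 := hnew 4 22 0 25 (by decide) h4_0 h4_25 adj_22_0 adj_22_25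
  apply Set.eq_univ_of_forall
  intro v
  fin_cases v
  exacts [h5_0, h5_1, h5_2, h5_3, h5_4, h5_5, h5_6, h5_7, h5_8, h5_9, h5_10, h5_11, h5_12, h5_13, h5_14, h5_15, h5_16, h5_17, h5_18, h5_19, h5_20, h5_21, h5_22, h5_23, h5_24, h5_25, h5_26, h5_27, h5_28, h5_29, h5_30]
end
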